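/- Let f(n) denote the maximum number of sets of cardinality at least 2 in a 2-laminar family of subsets of [n]. Then for all n > 2, f(n) ≤ 2·binom(n,2). -/

import Mathlib

open Finset

/-- `f n` is the maximum number of sets of cardinality at least `2` in a `2`-laminar
family of subsets of `[n]`. -/
noncomputable def f (n : ℕ) : ℕ :=
  sSup {m | ∃ F : Finset (Finset (Fin n)),
    (∀ A ∈ F, ∀ B ∈ F, 2 ≤ (A ∩ B).card → A ⊆ B ∨ B ⊆ A) ∧
    (∀ A ∈ F, 2 ≤ A.card) ∧ F.card = m}

/-- The set of covered pairs of a family. -/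
def cov {n : ℕ} (F : Finset (Finset (Fin n))) : Finset (Finset (Fin n)) :=
  (Finset.univ.powersetCard 2).filter (fun p => ∃ A ∈ F, p ⊆ A)

/-- The maximal members of a family. -/
def KK {n : ℕ} (F : Finset (Finset (Fin n))) : Finset (Finset (Fin n)) :=
  F.filter (fun M => ∀ B ∈ F, ¬ M ⊂ B)

lemma cov_mono {n : ℕ} {F G : Finset (Finset (Fin n))} (h : F ⊆ G) : cov F ⊆ cov G := by
  intro p hp
  rw [cov, mem_filter] at hp ⊢
  obtain ⟨h1, A, hA, hpA⟩ := hp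
  exact ⟨h1, A, h hA, hpA⟩

lemma exists_mem_KK {n : ℕ} {F : Finset (Finset (Fin n))} {A : Finset (Fin n)} (hA : A ∈ F) :
    ∃ M ∈ KK F, A ⊆ M := by
  classical
  obtain ⟨M, hM, hmax⟩ := (F.filter (fun B => A ⊆ B)).exists_maximal
    ⟨A, mem_filter.mpr ⟨hA, subset_rfl⟩⟩
  rw [mem_filter] at hM
  refine ⟨M, mem_filter.mpr ⟨hM.1, fun B hB hMB => ?_⟩, hM.2⟩
  exact hMB.2 (hmax (mem_filter.mpr ⟨hB, hM.2.trans hMB.subset⟩) hMB.subset)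

/-- Distinct maximal members intersect in at most one point. -/
lemma KK_inter {n : ℕ} {F : Finset (Finset (Fin n))}
    (hlam : ∀ A ∈ F, ∀ B ∈ F, 2 ≤ (A ∩ B).card → A ⊆ B ∨ B ⊆ A)
    {M₁ M₂ : Finset (Fin n)} (h₁ : M₁ ∈ KK F) (h₂ : M₂ ∈ KK F) (hne : M₁ ≠ M₂) :
    (M₁ ∩ M₂).card ≤ 1 := by
  by_contra h
  push_neg at h
  rw [KK, mem_filter] at h₁ h₂
  rcases hlam M₁ h₁.1 M₂ h₂.1 h with hs | hs
  · exact h₁.2 M₂ h₂.1 (hs.ssubset_of_ne hne)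
  · exact h₂.2 M₁ h₁.1 (hs.ssubset_of_ne hne.symm)

/-- Key lemma: |F| + #(maximal members) ≤ 2·#(covered pairs). -/
lemma mainA {n : ℕ} : ∀ F : Finset (Finset (Fin n)),
    (∀ A ∈ F, ∀ B ∈ F, 2 ≤ (A ∩ B).card → A ⊆ B ∨ B ⊆ A) →
    (∀ A ∈ F, 2 ≤ A.card) →
    F.card + (KK F).card ≤ 2 * (cov F).card := by
  classical
  intro F
  induction F using Finset.strongInduction with
  | _ F IH =>
  intro hlam hcard
  rcases F.eq_empty_or_nonempty with rfl | hne
  · simp [KK, cov]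
  -- the groups
  set G : Finset (Fin n) → Finset (Finset (Fin n)) := fun M => F.filter (· ⊆ M) with hGdef
  -- per-group bound
  have group : ∀ M ∈ KK F, (G M).card + 1 ≤ 2 * (cov (G M)).card := by
    intro M hM
    have hMF : M ∈ F := (mem_filter.mp hM).1
    have hMG : M ∈ G M := mem_filter.mpr ⟨hMF, subset_rfl⟩
    have hsubG : G M ⊆ F := filter_subset _ _
    set H := (G M).erase M with hHdef
    have hHG : H ⊆ G M := erase_subset _ _
    have hHF : H ⊂ F := by
      refine Finset.ssubset_iff_of_subset (hHG.trans hsubG) |>.mpr ⟨M, hMF, notMem_erase _ _⟩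
    have hGcard : (G M).card = H.card + 1 := by
      rw [hHdef, card_erase_of_mem hMG]
      have : 1 ≤ (G M).card := card_pos.mpr ⟨M, hMG⟩
      omega
    -- a pair inside M
    obtain ⟨p, hpM, hp2⟩ := Finset.exists_subset_card_eq (s := M) (n := 2) (hcard M hMF)
    have hpcov : p ∈ cov (G M) := by
      rw [cov, mem_filter, mem_powersetCard]
      exact ⟨⟨subset_univ _, hp2⟩, M, hMG, hpM⟩
    have hcovpos : 1 ≤ (cov (G M)).card := card_pos.mpr ⟨p, hpcov⟩
    rcases H.eq_empty_or_nonempty with hHe | hHne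
    · have h0 : H.card = 0 := by rw [hHe]; exact card_empty
      omega
    · have IHH := IH H hHF (fun A hA B hB => hlam A (hHF.1 hA) B (hHF.1 hB))
        (fun A hA => hcard A (hHF.1 hA))
      have hcovHG : cov H ⊆ cov (G M) := cov_mono hHG
      have hcovHGcard : (cov H).card ≤ (cov (G M)).card := card_le_card hcovHG
      obtain ⟨A₀, hA₀⟩ := hHne
      obtain ⟨M₁, hM₁, _⟩ := exists_mem_KK hA₀
      have hKHpos : 1 ≤ (KK H).card := card_pos.mpr ⟨M₁, hM₁⟩
      rcases Nat.lt_or_ge (KK H).card 2 with hKH | hKH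
      · -- exactly one maximal member M₁ of H
        have hKH1 : (KK H).card = 1 := le_antisymm (by omega) hKHpos
        obtain ⟨M₁', hKHeq⟩ := card_eq_one.mp hKH1
        have hM₁' : M₁' ∈ KK H := by rw [hKHeq]; exact mem_singleton_self _
        have hM₁H : M₁' ∈ H := (mem_filter.mp hM₁').1
        have hallsub : ∀ A ∈ H, A ⊆ M₁' := by
          intro A hA
          obtain ⟨M', hM', hAM'⟩ := exists_mem_KK hA
          rw [hKHeq, mem_singleton] at hM'
          rwa [hM'] at hAM'
        have hM₁M : M₁' ⊆ M := (mem_filter.mp (hHG hM₁H)).2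
        have hM₁ne : M₁' ≠ M := ne_of_mem_erase hM₁H
        obtain ⟨x, hxM, hxM₁⟩ := exists_of_ssubset (hM₁M.ssubset_of_ne hM₁ne)
        obtain ⟨y, hyM, hyx⟩ := exists_mem_ne (hcard M hMF) x
        set q : Finset (Fin n) := insert x {y} with hq
        have hq2 : q.card = 2 := by
          rw [hq, card_insert_of_notMem (by simp [hyx.symm]), card_singleton]
        have hqM : q ⊆ M := by
          rw [hq]
          exact insert_subset hxM (singleton_subset_iff.mpr hyM)
        have hqcov : q ∈ cov (G M) := by
          rw [cov, mem_filter, mem_powersetCard]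
          exact ⟨⟨subset_univ _, hq2⟩, M, hMG, hqM⟩
        have hqnot : q ∉ cov H := by
          rw [cov, mem_filter]
          rintro ⟨-, A, hA, hqA⟩
          exact hxM₁ (hallsub A hA (hqA (by simp [hq])))
        have : (cov H).card < (cov (G M)).card :=
          card_lt_card ((Finset.ssubset_iff_of_subset hcovHG).mpr ⟨q, hqcov, hqnot⟩)
        omega
      · omega
  -- F is the disjoint union of the groups
  have hdisj : ∀ M₁ ∈ KK F, ∀ M₂ ∈ KK F, M₁ ≠ M₂ → Disjoint (G M₁) (G M₂) := by
    intro M₁ h₁ M₂ h₂ hne12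
    rw [disjoint_left]
    intro A hA₁ hA₂
    have hAF : A ∈ F := (mem_filter.mp hA₁).1
    have h2 : 2 ≤ (M₁ ∩ M₂).card := by
      refine le_trans (hcard A hAF) (card_le_card ?_)
      exact subset_inter (mem_filter.mp hA₁).2 (mem_filter.mp hA₂).2
    exact absurd (KK_inter hlam h₁ h₂ hne12) (by omega)
  have hcovdisj : ∀ M₁ ∈ KK F, ∀ M₂ ∈ KK F, M₁ ≠ M₂ → Disjoint (cov (G M₁)) (cov (G M₂)) := by
    intro M₁ h₁ M₂ h₂ hne12
    rw [disjoint_left]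
    intro p hp₁ hp₂
    rw [cov, mem_filter, mem_powersetCard] at hp₁ hp₂
    obtain ⟨⟨-, hp2⟩, A, hA, hpA⟩ := hp₁
    obtain ⟨-, A', hA', hpA'⟩ := hp₂
    have h2 : 2 ≤ (M₁ ∩ M₂).card := by
      refine le_trans (le_of_eq hp2.symm) (card_le_card ?_)
      exact subset_inter (hpA.trans (mem_filter.mp hA).2) (hpA'.trans (mem_filter.mp hA').2)
    exact absurd (KK_inter hlam h₁ h₂ hne12) (by omega)
  have hFeq : F = (KK F).biUnion G := by
    apply Subset.antisymm
    · intro A hA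
      obtain ⟨M, hM, hAM⟩ := exists_mem_KK hA
      exact mem_biUnion.mpr ⟨M, hM, mem_filter.mpr ⟨hA, hAM⟩⟩
    · intro A hA
      obtain ⟨M, _, hA'⟩ := mem_biUnion.mp hA
      exact (mem_filter.mp hA').1
  have hcardF : F.card = ∑ M ∈ KK F, (G M).card := by
    conv_lhs => rw [hFeq]
    exact card_biUnion hdisj
  have hcovsum : ∑ M ∈ KK F, (cov (G M)).card ≤ (cov F).card := by
    rw [← card_biUnion hcovdisj]
    refine card_le_card ?_
    intro p hp
    obtain ⟨M, _, hp'⟩ := mem_biUnion.mp hp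
    exact cov_mono (filter_subset _ _) hp'
  calc F.card + (KK F).card = ∑ M ∈ KK F, ((G M).card + 1) := by
        rw [sum_add_distrib, sum_const, smul_eq_mul, mul_one, hcardF]
    _ ≤ ∑ M ∈ KK F, 2 * (cov (G M)).card := sum_le_sum group
    _ = 2 * ∑ M ∈ KK F, (cov (G M)).card := by rw [mul_sum]
    _ ≤ 2 * (cov F).card := by omega

/-- For all n > 2, f(n) ≤ 2·C(n,2). -/
theorem f_le_two_choose (n : ℕ) (hn : 2 < n) : f n ≤ 2 * n.choose 2 := by
  classical
  apply csSup_le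
  · exact ⟨0, ∅, by simp⟩
  · rintro m ⟨F, hlam, hcard, rfl⟩
    have h1 : F.card + (KK F).card ≤ 2 * (cov F).card := mainA F hlam hcard
    have h2 : (cov F).card ≤ n.choose 2 := by
      have : (cov F).card ≤ ((Finset.univ : Finset (Fin n)).powersetCard 2).card :=
        card_le_card (filter_subset _ _)
      rwa [card_powersetCard, card_univ, Fintype.card_fin] at this
    omega
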